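/- In Strings and Coins on the loopy star L_n with n outer vertices, the optimal score is ((n+3)/2, (n-1)/2) when n is odd, and ((n-2)/2, (n+4)/2) when n is even. -/

import Mathlib

/-- A position in Strings and Coins: a finite multigraph, with vertex set `verts`
and a multiset of (possibly loop) edges, each given as an ordered pair. -/
structure SCPos (V : Type) where
  verts : Finset V
  edges : Multiset (V × V)

variable {V : Type} [DecidableEq V]

/-- Number of edges incident to `v` (each edge, including a loop, counted once);
only being zero or nonzero matters for captures. -/
def SCPos.deg (p : SCPos V) (v : V) : ℕ :=
  (p.edges.filter (fun f => f.1 = v ∨ f.2 = v)).card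

/-- Degree of `v`, where a loop at `v` contributes 2. -/
def SCPos.degree (p : SCPos V) (v : V) : ℕ :=
  (p.edges.map (fun e => (if e.1 = v then 1 else 0) + (if e.2 = v then 1 else 0))).sum

/-- The position obtained by removing one copy of edge `e`. -/
def SCPos.remove (p : SCPos V) (e : V × V) : SCPos V :=
  ⟨p.verts, p.edges.erase e⟩

/-- The number of vertices captured by removing edge `e` from `p`:
endpoints of `e` whose degree drops to zero. -/
def SCPos.caps (p : SCPos V) (e : V × V) : ℕ :=
  (p.verts.filter (fun v => (v = e.1 ∨ v = e.2) ∧ (p.remove e).deg v = 0)).card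

/-- Optimal score `(mover's points, opponent's points)` of Strings and Coins,
under play where each player maximizes their own number of captured vertices.
A player who captures at least one vertex moves again. -/
noncomputable def SCPos.score (p : SCPos V) : ℕ × ℕ :=
  if h : p.edges = 0 then (0, 0)
  else
    (p.edges.toList.attach.map (fun ⟨e, he⟩ =>
      let s := (p.remove e).score
      let c := p.caps e
      if c = 0 then (s.2, s.1) else (s.1 + c, s.2))).foldl
      (fun best o => if best.1 ≤ o.1 then o else best) (0, 0)
termination_by p.edges.card
decreasing_by
  exact Multiset.card_erase_lt_of_mem (Multiset.mem_toList.mp he)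

/-- The cycle graph `C_n` as a Strings and Coins position. -/
def cyclePos (n : ℕ) : SCPos ℕ :=
  ⟨Finset.range n, ((List.range n).map (fun i => (i, (i + 1) % n)) : List (ℕ × ℕ))⟩

/-- The friendship graph `F_n`: `n` triangles sharing the common vertex `0`. -/
def friendshipPos (n : ℕ) : SCPos ℕ :=
  ⟨Finset.range (2 * n + 1),
   (((List.range n).flatMap fun i =>
      [(0, 2 * i + 1), (0, 2 * i + 2), (2 * i + 1, 2 * i + 2)]) : List (ℕ × ℕ))⟩

/-- The pinwheel graph `PW_n`: `n` copies of `C_4` sharing the common vertex `0`. -/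
def pinwheelPos (n : ℕ) : SCPos ℕ :=
  ⟨Finset.range (3 * n + 1),
   (((List.range n).flatMap fun i =>
      [(0, 3 * i + 1), (3 * i + 1, 3 * i + 2), (3 * i + 2, 3 * i + 3), (3 * i + 3, 0)]) :
     List (ℕ × ℕ))⟩

/-- The loopy star `L_n`: center `0`, outer vertices `1, …, n`, each joined to the
center by an edge and carrying one loop. -/
def loopyStarPos (n : ℕ) : SCPos ℕ :=
  ⟨Finset.range (n + 1),
   (((List.range n).flatMap fun i => [(0, i + 1), (i + 1, i + 1)]) : List (ℕ × ℕ))⟩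

/-- The double loopy star `L(n,2)`: center `0`, outer vertices `1, …, n`, each joined
to the center by an edge and carrying two loops. -/
def doubleLoopyStarPos (n : ℕ) : SCPos ℕ :=
  ⟨Finset.range (n + 1),
   (((List.range n).flatMap fun i => [(0, i + 1), (i + 1, i + 1), (i + 1, i + 1)]) :
     List (ℕ × ℕ))⟩

/-- The complete bipartite graph `K(1, b)` (a star with `b` leaves). -/
def starPos (b : ℕ) : SCPos ℕ :=
  ⟨Finset.range (b + 1), (((List.range b).map fun i => (0, i + 1)) : List (ℕ × ℕ))⟩

/-- The complete bipartite graph `K(2, b)`: part `{0, 1}` and part `{2, …, b+1}`. -/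
def k2bPos (b : ℕ) : SCPos ℕ :=
  ⟨Finset.range (b + 2),
   (((List.range b).flatMap fun j => [(0, j + 2), (1, j + 2)]) : List (ℕ × ℕ))⟩

/-- The balloon path `BP_n`: a path on vertices `0, …, n-1` with one loop at each vertex. -/
def balloonPathPos (n : ℕ) : SCPos ℕ :=
  ⟨Finset.range n,
   ((((List.range (n - 1)).map fun i => (i, i + 1)) ++
     ((List.range n).map fun i => (i, i))) : List (ℕ × ℕ))⟩

/-- The loopy cycle `C_(n,1)`: the cycle `C_n` with one extra loop at vertex `0`. -/
def loopyCyclePos (n : ℕ) : SCPos ℕ :=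
  ⟨Finset.range n, (0, 0) ::ₘ (cyclePos n).edges⟩

/-- The Strings and Coins position of a finite simple graph: all vertices,
and one (arbitrarily oriented) edge for each edge of the graph. -/
noncomputable def posOfGraph {W : Type} [Fintype W] [DecidableEq W]
    (G : SimpleGraph W) [DecidableRel G.Adj] : SCPos W :=
  ⟨Finset.univ, G.edgeFinset.val.map Quot.out⟩

/-! ### Auxiliary development for `stmt11` -/

namespace SCAux

open Finset

/-- The pair of edges at outer vertex `i`: a spoke if `(f i).1`, a loop if `(f i).2`. -/
def slotM (f : ℕ → Bool × Bool) (i : ℕ) : Multiset (ℕ × ℕ) :=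
  (cond (f i).1 {(0, i + 1)} 0) + (cond (f i).2 {(i + 1, i + 1)} 0)

def edgesM (f : ℕ → Bool × Bool) (n : ℕ) : Multiset (ℕ × ℕ) :=
  ∑ i ∈ Finset.range n, slotM f i

def lsPos (f : ℕ → Bool × Bool) (n : ℕ) : SCPos ℕ :=
  ⟨Finset.range (n + 1), edgesM f n⟩

def aC (f : ℕ → Bool × Bool) (n : ℕ) : ℕ :=
  ((range n).filter fun i => f i = (true, true)).card
def bC (f : ℕ → Bool × Bool) (n : ℕ) : ℕ :=
  ((range n).filter fun i => f i = (true, false)).card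
def cC (f : ℕ → Bool × Bool) (n : ℕ) : ℕ :=
  ((range n).filter fun i => f i = (false, true)).card

/-- Claimed optimal score of the state with `a` full outer vertices, `b` spoke-only
ones and `c` loop-only ones. -/
def Vfun (a b c : ℕ) : ℕ × ℕ :=
  if a = 0 then (b + c + (if b = 0 then 0 else 1), 0)
  else if a % 2 = 1 then ((a + 3) / 2 + b + c, (a - 1) / 2)
  else ((a - 2) / 2 + b + c, (a + 4) / 2)

/-! #### Generic sums of multisets -/

lemma hom_sum (g : Multiset (ℕ × ℕ) → ℕ) (h0 : g 0 = 0)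
    (hadd : ∀ s t, g (s + t) = g s + g t) (s : Finset ℕ) (m : ℕ → Multiset (ℕ × ℕ)) :
    g (∑ i ∈ s, m i) = ∑ i ∈ s, g (m i) := by
  classical
  induction s using Finset.cons_induction with
  | empty => simpa using h0
  | cons a s ha ih => rw [Finset.sum_cons, Finset.sum_cons, hadd, ih]

def degM (s : Multiset (ℕ × ℕ)) (v : ℕ) : ℕ :=
  (s.filter (fun e => e.1 = v ∨ e.2 = v)).card

lemma degM_sum' (s : Finset ℕ) (m : ℕ → Multiset (ℕ × ℕ)) (v : ℕ) :
    degM (∑ i ∈ s, m i) v = ∑ i ∈ s, degM (m i) v := by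
  exact hom_sum (fun s => degM s v) (by simp [degM]) (fun s t => by
    simp [degM, Multiset.filter_add]) s m

lemma cardM_sum (s : Finset ℕ) (m : ℕ → Multiset (ℕ × ℕ)) :
    Multiset.card (∑ i ∈ s, m i) = ∑ i ∈ s, Multiset.card (m i) := by
  apply hom_sum <;> simp

/-! #### Slot facts -/

lemma degM_slot_zero (f : ℕ → Bool × Bool) (j : ℕ) :
    degM (slotM f j) 0 = cond (f j).1 1 0 := by
  rcases h : f j with ⟨b1, b2⟩
  cases b1 <;> cases b2 <;>
    simp [slotM, degM, h, Multiset.filter_singleton, Nat.succ_ne_zero]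

lemma degM_slot_self (f : ℕ → Bool × Bool) (i : ℕ) :
    degM (slotM f i) (i + 1) = cond (f i).1 1 0 + cond (f i).2 1 0 := by
  rcases h : f i with ⟨b1, b2⟩
  cases b1 <;> cases b2 <;>
    simp [slotM, degM, h, Multiset.filter_singleton]

lemma degM_slot_ne (f : ℕ → Bool × Bool) {i j : ℕ} (hne : j ≠ i) :
    degM (slotM f j) (i + 1) = 0 := by
  rcases h : f j with ⟨b1, b2⟩
  have h1 : j + 1 ≠ i + 1 := by omega
  cases b1 <;> cases b2 <;>
    simp [slotM, degM, h, Multiset.filter_singleton, h1, hne, Nat.succ_ne_zero]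

lemma card_slot (f : ℕ → Bool × Bool) (i : ℕ) :
    Multiset.card (slotM f i) = cond (f i).1 1 0 + cond (f i).2 1 0 := by
  rcases h : f i with ⟨b1, b2⟩
  cases b1 <;> cases b2 <;> simp [slotM, h]

lemma mem_slot (f : ℕ → Bool × Bool) (i : ℕ) (e : ℕ × ℕ) :
    e ∈ slotM f i ↔
      ((f i).1 = true ∧ e = (0, i + 1)) ∨ ((f i).2 = true ∧ e = (i + 1, i + 1)) := by
  rcases h : f i with ⟨b1, b2⟩
  cases b1 <;> cases b2 <;> simp [slotM, h]

/-! #### Edge-multiset facts -/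

lemma deg_zero (f : ℕ → Bool × Bool) (n : ℕ) :
    degM (edgesM f n) 0 = ∑ i ∈ range n, cond (f i).1 1 0 := by
  rw [edgesM, degM_sum']
  exact Finset.sum_congr rfl fun i _ => degM_slot_zero f i

lemma deg_succ (f : ℕ → Bool × Bool) {n i : ℕ} (hi : i < n) :
    degM (edgesM f n) (i + 1) = cond (f i).1 1 0 + cond (f i).2 1 0 := by
  rw [edgesM, degM_sum', Finset.sum_eq_single_of_mem i (mem_range.2 hi)]
  · exact degM_slot_self f i
  · intro j _ hne; exact degM_slot_ne f hne

lemma card_edges (f : ℕ → Bool × Bool) (n : ℕ) :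
    Multiset.card (edgesM f n) = ∑ i ∈ range n, (cond (f i).1 1 0 + cond (f i).2 1 0) := by
  rw [edgesM, cardM_sum]
  exact Finset.sum_congr rfl fun i _ => card_slot f i

lemma sum_spoke (f : ℕ → Bool × Bool) (n : ℕ) :
    ∑ i ∈ range n, cond (f i).1 1 0 = aC f n + bC f n := by
  rw [aC, bC, Finset.card_filter, Finset.card_filter, ← Finset.sum_add_distrib]
  refine Finset.sum_congr rfl fun i _ => ?_
  rcases h : f i with ⟨b1, b2⟩
  cases b1 <;> cases b2 <;> simp [h]

lemma card_edges_eq (f : ℕ → Bool × Bool) (n : ℕ) :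
    Multiset.card (edgesM f n) = 2 * aC f n + bC f n + cC f n := by
  rw [card_edges, aC, bC, cC, Finset.card_filter, Finset.card_filter, Finset.card_filter,
    Finset.mul_sum, ← Finset.sum_add_distrib, ← Finset.sum_add_distrib]
  refine Finset.sum_congr rfl fun i _ => ?_
  rcases h : f i with ⟨b1, b2⟩
  cases b1 <;> cases b2 <;> simp [h]

lemma mem_edgesM (f : ℕ → Bool × Bool) (n : ℕ) (e : ℕ × ℕ) :
    e ∈ edgesM f n ↔ ∃ i, i < n ∧
      (((f i).1 = true ∧ e = (0, i + 1)) ∨ ((f i).2 = true ∧ e = (i + 1, i + 1))) := by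
  rw [edgesM, Multiset.mem_sum]
  simp only [mem_range, mem_slot]

/-! #### Counting under update -/

lemma cnt_erase (P : Bool × Bool → Prop) [DecidablePred P] (f : ℕ → Bool × Bool)
    {n i : ℕ} (hi : i < n) :
    ((range n).filter fun j => P (f j)).card =
      (((range n).erase i).filter fun j => P (f j)).card + (if P (f i) then 1 else 0) := by
  conv_lhs => rw [← Finset.insert_erase (Finset.mem_range.2 hi)]
  rw [Finset.filter_insert]
  split_ifs with h
  · rw [Finset.card_insert_of_notMem]
    intro hmem
    exact Finset.notMem_erase i (range n) (Finset.mem_of_mem_filter i hmem)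
  · simp

lemma cnt_update (P : Bool × Bool → Prop) [DecidablePred P] (f : ℕ → Bool × Bool)
    {n i : ℕ} (v : Bool × Bool) (hi : i < n) :
    ((range n).filter fun j => P (Function.update f i v j)).card =
      (((range n).erase i).filter fun j => P (f j)).card + (if P v then 1 else 0) := by
  rw [cnt_erase P (Function.update f i v) hi, Function.update_self]
  congr 2
  apply Finset.filter_congr
  intro j hj
  rw [Function.update_of_ne (Finset.ne_of_mem_erase hj)]

/-! #### Removing an edge -/

lemma erase_spoke (f : ℕ → Bool × Bool) {n i : ℕ} (hi : i < n) (h1 : (f i).1 = true) :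
    (edgesM f n).erase (0, i + 1) = edgesM (Function.update f i (false, (f i).2)) n := by
  have hm : i ∈ range n := mem_range.2 hi
  rw [edgesM, ← Finset.add_sum_erase _ _ hm, edgesM, ← Finset.add_sum_erase _ _ hm]
  have hR : ∑ j ∈ (range n).erase i, slotM (Function.update f i (false, (f i).2)) j =
      ∑ j ∈ (range n).erase i, slotM f j := by
    refine Finset.sum_congr rfl fun j hj => ?_
    unfold slotM
    rw [Function.update_of_ne (Finset.ne_of_mem_erase hj)]
  rw [hR]
  unfold slotM
  rw [Function.update_self, h1]
  simp only [cond_true, cond_false]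
  rw [add_assoc, Multiset.singleton_add, Multiset.erase_cons_head, zero_add]

lemma erase_loop (f : ℕ → Bool × Bool) {n i : ℕ} (hi : i < n) (h2 : (f i).2 = true) :
    (edgesM f n).erase (i + 1, i + 1) = edgesM (Function.update f i ((f i).1, false)) n := by
  have hm : i ∈ range n := mem_range.2 hi
  rw [edgesM, ← Finset.add_sum_erase _ _ hm, edgesM, ← Finset.add_sum_erase _ _ hm]
  have hR : ∑ j ∈ (range n).erase i, slotM (Function.update f i ((f i).1, false)) j =
      ∑ j ∈ (range n).erase i, slotM f j := by
    refine Finset.sum_congr rfl fun j hj => ?_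
    unfold slotM
    rw [Function.update_of_ne (Finset.ne_of_mem_erase hj)]
  rw [hR]
  unfold slotM
  rw [Function.update_self, h2]
  simp only [cond_true, cond_false, add_zero]
  rw [add_comm (cond (f i).1 ({(0, i + 1)} : Multiset (ℕ × ℕ)) 0) {(i + 1, i + 1)},
    add_assoc, Multiset.singleton_add, Multiset.erase_cons_head]

/-! #### caps helpers -/

lemma card_filter_pair (s : Finset ℕ) (x y : ℕ) (hx : x ∈ s) (hy : y ∈ s) (hxy : x ≠ y)
    (q : ℕ → Prop) [DecidablePred q] :
    (s.filter (fun v => (v = x ∨ v = y) ∧ q v)).card =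
      (if q x then 1 else 0) + (if q y then 1 else 0) := by
  have h : s.filter (fun v => (v = x ∨ v = y) ∧ q v) = ({x, y} : Finset ℕ).filter q := by
    ext v
    simp only [Finset.mem_filter, Finset.mem_insert, Finset.mem_singleton]
    constructor
    · rintro ⟨-, hvy, hq⟩; exact ⟨hvy, hq⟩
    · rintro ⟨hvy, hq⟩
      refine ⟨?_, hvy, hq⟩
      rcases hvy with rfl | rfl
      exacts [hx, hy]
  rw [h, show ({x, y} : Finset ℕ) = insert x {y} from rfl, Finset.filter_insert,
    Finset.filter_singleton]
  split_ifs with h1 h2 h2 <;>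
    simp [Finset.card_insert_of_notMem, Finset.mem_singleton, hxy]

lemma card_filter_self (s : Finset ℕ) (x : ℕ) (hx : x ∈ s)
    (q : ℕ → Prop) [DecidablePred q] :
    (s.filter (fun v => (v = x ∨ v = x) ∧ q v)).card = if q x then 1 else 0 := by
  have h : s.filter (fun v => (v = x ∨ v = x) ∧ q v) = ({x} : Finset ℕ).filter q := by
    ext v
    simp only [Finset.mem_filter, Finset.mem_singleton, or_self]
    constructor
    · rintro ⟨-, hvy, hq⟩; exact ⟨hvy, hq⟩
    · rintro ⟨rfl, hq⟩; exact ⟨hx, rfl, hq⟩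
  rw [h, Finset.filter_singleton]
  split_ifs <;> simp

/-! #### The foldl picking lemma -/

lemma foldl_pick : ∀ (l : List (ℕ × ℕ)) (acc w : ℕ × ℕ),
    (∀ o ∈ l, o = w ∨ o.1 < w.1) → (acc = w ∨ acc.1 < w.1 ∨ acc = (0, 0)) →
    (w ∈ l ∨ acc = w) →
    l.foldl (fun best o => if best.1 ≤ o.1 then o else best) acc = w := by
  intro l
  induction l with
  | nil =>
    intro acc w _ _ h3
    simp only [List.not_mem_nil, false_or] at h3
    simpa using h3
  | cons o l ih =>
    intro acc w h1 h2 h3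
    rw [List.foldl_cons]
    have ho := h1 o List.mem_cons_self
    by_cases hle : acc.1 ≤ o.1
    · rw [if_pos hle]
      refine ih _ _ (fun o' ho' => h1 o' (List.mem_cons_of_mem _ ho')) ?_ ?_
      · rcases ho with rfl | hlt
        · exact Or.inl rfl
        · exact Or.inr (Or.inl hlt)
      · rcases h3 with h3 | rfl
        · rcases List.mem_cons.1 h3 with rfl | h3
          · exact Or.inr rfl
          · exact Or.inl h3
        · rcases ho with rfl | hlt
          · exact Or.inr rfl
          · omega
    · rw [if_neg hle]
      have hacc : acc = w ∨ acc.1 < w.1 := by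
        rcases h2 with h | h | rfl
        · exact Or.inl h
        · exact Or.inr h
        · exact absurd (Nat.zero_le o.1) hle
      refine ih _ _ (fun o' ho' => h1 o' (List.mem_cons_of_mem _ ho'))
        (by tauto) ?_
      rcases h3 with h3 | rfl
      · rcases List.mem_cons.1 h3 with rfl | h3
        · rcases hacc with rfl | hlt
          · exact absurd le_rfl hle
          · omega
        · exact Or.inl h3
      · exact Or.inr rfl

end SCAux

namespace SCAux
open Finset

/-- The value of the option of removing edge `e` from `p`, as it appears in `SCPos.score`. -/
noncomputable def OV (p : SCPos ℕ) (e : ℕ × ℕ) : ℕ × ℕ :=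
  if p.caps e = 0 then ((p.remove e).score.2, (p.remove e).score.1)
  else ((p.remove e).score.1 + p.caps e, (p.remove e).score.2)

/-! #### Arithmetic facts about `Vfun` -/

lemma Vfun_zero : Vfun 0 0 0 = (0, 0) := by simp [Vfun]

lemma L1 (a b c : ℕ) : ((Vfun a b c).1 + 1, (Vfun a b c).2) = Vfun a b (c + 1) := by
  simp only [Vfun]; split_ifs <;> simp only [Prod.mk.injEq, and_true, true_and] <;> first | omega | simp_all

lemma L2 (a b c : ℕ) :
    ((Vfun a b c).1 + ((if a + b = 0 then 1 else 0) + 1), (Vfun a b c).2) =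
      Vfun a (b + 1) c := by
  simp only [Vfun]; split_ifs <;> simp only [Prod.mk.injEq, and_true, true_and] <;> first | omega | simp_all

lemma L3 (a b c : ℕ) :
    ((Vfun a (b + 1) c).2, (Vfun a (b + 1) c).1) = Vfun (a + 1) b c ∨
      (Vfun a (b + 1) c).2 < (Vfun (a + 1) b c).1 := by
  simp only [Vfun]; split_ifs <;> simp only [Prod.mk.injEq, and_true, true_and] <;> first | omega | simp_all

lemma L3eq (a : ℕ) (ha : 1 ≤ a) :
    ((Vfun a 1 0).2, (Vfun a 1 0).1) = Vfun (a + 1) 0 0 := by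
  simp only [Vfun]; split_ifs <;> simp only [Prod.mk.injEq, and_true, true_and] <;> first | omega | simp_all

lemma L4a (c : ℕ) : ((Vfun 0 0 (c + 1)).1 + 1, (Vfun 0 0 (c + 1)).2) = Vfun 1 0 c := by
  simp only [Vfun]; split_ifs <;> simp only [Prod.mk.injEq, and_true, true_and] <;> first | omega | simp_all

lemma L4b (a b c : ℕ) :
    ((Vfun a b (c + 1)).2, (Vfun a b (c + 1)).1) = Vfun (a + 1) b c ∨
      (Vfun a b (c + 1)).2 < (Vfun (a + 1) b c).1 := by
  simp only [Vfun]; split_ifs <;> simp only [Prod.mk.injEq, and_true, true_and] <;> first | omega | simp_all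

/-! #### Specialized count lemmas -/

lemma aC_erase (f : ℕ → Bool × Bool) {n i : ℕ} (hi : i < n) :
    aC f n = (((range n).erase i).filter fun j => f j = (true, true)).card +
      (if f i = (true, true) then 1 else 0) := cnt_erase (fun x => x = (true, true)) f hi

lemma bC_erase (f : ℕ → Bool × Bool) {n i : ℕ} (hi : i < n) :
    bC f n = (((range n).erase i).filter fun j => f j = (true, false)).card +
      (if f i = (true, false) then 1 else 0) := cnt_erase (fun x => x = (true, false)) f hi

lemma cC_erase (f : ℕ → Bool × Bool) {n i : ℕ} (hi : i < n) :
    cC f n = (((range n).erase i).filter fun j => f j = (false, true)).card +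
      (if f i = (false, true) then 1 else 0) := cnt_erase (fun x => x = (false, true)) f hi

lemma aC_update (f : ℕ → Bool × Bool) {n i : ℕ} (v : Bool × Bool) (hi : i < n) :
    aC (Function.update f i v) n =
      (((range n).erase i).filter fun j => f j = (true, true)).card +
        (if v = (true, true) then 1 else 0) := cnt_update (fun x => x = (true, true)) f v hi

lemma bC_update (f : ℕ → Bool × Bool) {n i : ℕ} (v : Bool × Bool) (hi : i < n) :
    bC (Function.update f i v) n =
      (((range n).erase i).filter fun j => f j = (true, false)).card +
        (if v = (true, false) then 1 else 0) := cnt_update (fun x => x = (true, false)) f v hi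

lemma cC_update (f : ℕ → Bool × Bool) {n i : ℕ} (v : Bool × Bool) (hi : i < n) :
    cC (Function.update f i v) n =
      (((range n).erase i).filter fun j => f j = (false, true)).card +
        (if v = (false, true) then 1 else 0) := cnt_update (fun x => x = (false, true)) f v hi

/-! #### `caps` on `lsPos` -/

lemma caps_pair (f : ℕ → Bool × Bool) (n : ℕ) (e : ℕ × ℕ)
    (hx : e.1 ∈ Finset.range (n + 1)) (hy : e.2 ∈ Finset.range (n + 1)) (hne : e.1 ≠ e.2) :
    (lsPos f n).caps e = (if degM ((edgesM f n).erase e) e.1 = 0 then 1 else 0) +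
      (if degM ((edgesM f n).erase e) e.2 = 0 then 1 else 0) :=
  card_filter_pair (Finset.range (n + 1)) e.1 e.2 hx hy hne
    (fun v => degM ((edgesM f n).erase e) v = 0)

lemma caps_loop (f : ℕ → Bool × Bool) (n : ℕ) (x : ℕ) (hx : x ∈ Finset.range (n + 1)) :
    (lsPos f n).caps (x, x) = if degM ((edgesM f n).erase (x, x)) x = 0 then 1 else 0 :=
  card_filter_self (Finset.range (n + 1)) x hx
    (fun v => degM ((edgesM f n).erase (x, x)) v = 0)

/-! #### Values of the four kinds of moves -/

section MoveValues

variable {f : ℕ → Bool × Bool} {n i : ℕ}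

/-- Common prelude for spoke removals. -/
lemma remove_spoke (hi : i < n) (h1 : (f i).1 = true) :
    (lsPos f n).remove (0, i + 1) = lsPos (Function.update f i (false, (f i).2)) n := by
  show (⟨Finset.range (n + 1), (edgesM f n).erase (0, i + 1)⟩ : SCPos ℕ) = _
  rw [erase_spoke f hi h1]; rfl

lemma remove_loop (hi : i < n) (h2 : (f i).2 = true) :
    (lsPos f n).remove (i + 1, i + 1) = lsPos (Function.update f i ((f i).1, false)) n := by
  show (⟨Finset.range (n + 1), (edgesM f n).erase (i + 1, i + 1)⟩ : SCPos ℕ) = _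
  rw [erase_loop f hi h2]; rfl

lemma caps_spoke_val (hi : i < n) (h1 : (f i).1 = true) :
    (lsPos f n).caps (0, i + 1) =
      (if (((range n).erase i).filter fun j => f j = (true, true)).card +
          (((range n).erase i).filter fun j => f j = (true, false)).card = 0
        then 1 else 0) + (if (f i).2 = true then 0 else 1) := by
  rw [caps_pair f n (0, i + 1) (by simp) (by simp [Nat.succ_lt_succ hi]) (by simp)]
  dsimp only
  rw [erase_spoke f hi h1]
  rw [show degM (edgesM (Function.update f i (false, (f i).2)) n) 0 =
      aC (Function.update f i (false, (f i).2)) n + bC (Function.update f i (false, (f i).2)) n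
    from by rw [deg_zero, sum_spoke]]
  rw [deg_succ _ hi, Function.update_self]
  rw [aC_update f _ hi, bC_update f _ hi]
  rcases h2 : (f i).2 <;> simp

lemma caps_loop_val (hi : i < n) (h2 : (f i).2 = true) :
    (lsPos f n).caps (i + 1, i + 1) = if (f i).1 = true then 0 else 1 := by
  rw [caps_loop f n (i + 1) (by simp [Nat.succ_lt_succ hi])]
  rw [erase_loop f hi h2]
  rw [deg_succ _ hi, Function.update_self]
  rcases h1 : (f i).1 <;> simp

/-- Removing the spoke of a spoke-only vertex. -/
lemma spoke_val_TF (hi : i < n) (hfi : f i = (true, false))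
    (hscore : (lsPos (Function.update f i (false, (f i).2)) n).score =
      Vfun (aC (Function.update f i (false, (f i).2)) n)
        (bC (Function.update f i (false, (f i).2)) n)
        (cC (Function.update f i (false, (f i).2)) n)) :
    OV (lsPos f n) (0, i + 1) = Vfun (aC f n) (bC f n) (cC f n) := by
  have h1 : (f i).1 = true := by rw [hfi]
  have h2 : (f i).2 = false := by rw [hfi]
  rw [OV, remove_spoke hi h1, hscore, caps_spoke_val hi h1,
    aC_update f _ hi, bC_update f _ hi, cC_update f _ hi,
    aC_erase f hi, bC_erase f hi, cC_erase f hi, h2, hfi]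
  norm_num
  simpa using L2 (((range n).erase i).filter fun j => f j = (true, true)).card
    (((range n).erase i).filter fun j => f j = (true, false)).card
    (((range n).erase i).filter fun j => f j = (false, true)).card

/-- Removing the spoke of a full vertex. -/
lemma spoke_val_TT (hi : i < n) (hfi : f i = (true, true))
    (hscore : (lsPos (Function.update f i (false, (f i).2)) n).score =
      Vfun (aC (Function.update f i (false, (f i).2)) n)
        (bC (Function.update f i (false, (f i).2)) n)
        (cC (Function.update f i (false, (f i).2)) n)) :
    OV (lsPos f n) (0, i + 1) = Vfun (aC f n) (bC f n) (cC f n) ∨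
      (OV (lsPos f n) (0, i + 1)).1 < (Vfun (aC f n) (bC f n) (cC f n)).1 := by
  have h1 : (f i).1 = true := by rw [hfi]
  have h2 : (f i).2 = true := by rw [hfi]
  rw [OV, remove_spoke hi h1, hscore, caps_spoke_val hi h1,
    aC_update f _ hi, bC_update f _ hi, cC_update f _ hi,
    aC_erase f hi, bC_erase f hi, cC_erase f hi, h2, hfi]
  generalize (((range n).erase i).filter fun j => f j = (true, true)).card = A
  generalize (((range n).erase i).filter fun j => f j = (true, false)).card = B
  generalize (((range n).erase i).filter fun j => f j = (false, true)).card = C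
  norm_num
  by_cases hz : A = 0 ∧ B = 0
  · obtain ⟨hA, hB⟩ := hz
    subst hA; subst hB
    norm_num
    left
    simpa using L4a C
  · have himp : A = 0 → ¬B = 0 := by tauto
    rw [if_pos himp]
    exact L4b A B C

/-- Removing the spoke of a full vertex when it is the unique spoke: exact value. -/
lemma spoke_val_TT_eq (hi : i < n) (hfi : f i = (true, true))
    (hscore : (lsPos (Function.update f i (false, (f i).2)) n).score =
      Vfun (aC (Function.update f i (false, (f i).2)) n)
        (bC (Function.update f i (false, (f i).2)) n)
        (cC (Function.update f i (false, (f i).2)) n))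
    (ha : aC f n = 1) (hb : bC f n = 0) :
    OV (lsPos f n) (0, i + 1) = Vfun (aC f n) (bC f n) (cC f n) := by
  have h1 : (f i).1 = true := by rw [hfi]
  have h2 : (f i).2 = true := by rw [hfi]
  have hA : (((range n).erase i).filter fun j => f j = (true, true)).card = 0 := by
    have h := aC_erase f hi; rw [hfi] at h; simp at h; omega
  have hB : (((range n).erase i).filter fun j => f j = (true, false)).card = 0 := by
    have h := bC_erase f hi; rw [hfi] at h; simp at h; omega
  rw [OV, remove_spoke hi h1, hscore, caps_spoke_val hi h1,
    aC_update f _ hi, bC_update f _ hi, cC_update f _ hi,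
    aC_erase f hi, bC_erase f hi, cC_erase f hi, h2, hfi, hA, hB]
  norm_num
  simpa using L4a (((range n).erase i).filter fun j => f j = (false, true)).card

/-- Removing the loop of a loop-only vertex. -/
lemma loop_val_FT (hi : i < n) (hfi : f i = (false, true))
    (hscore : (lsPos (Function.update f i ((f i).1, false)) n).score =
      Vfun (aC (Function.update f i ((f i).1, false)) n)
        (bC (Function.update f i ((f i).1, false)) n)
        (cC (Function.update f i ((f i).1, false)) n)) :
    OV (lsPos f n) (i + 1, i + 1) = Vfun (aC f n) (bC f n) (cC f n) := by
  have h1 : (f i).1 = false := by rw [hfi]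
  have h2 : (f i).2 = true := by rw [hfi]
  rw [OV, remove_loop hi h2, hscore, caps_loop_val hi h2,
    aC_update f _ hi, bC_update f _ hi, cC_update f _ hi,
    aC_erase f hi, bC_erase f hi, cC_erase f hi, h1, hfi]
  norm_num
  simpa using L1 (((range n).erase i).filter fun j => f j = (true, true)).card
    (((range n).erase i).filter fun j => f j = (true, false)).card
    (((range n).erase i).filter fun j => f j = (false, true)).card

/-- Removing the loop of a full vertex. -/
lemma loop_val_TT (hi : i < n) (hfi : f i = (true, true))
    (hscore : (lsPos (Function.update f i ((f i).1, false)) n).score =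
      Vfun (aC (Function.update f i ((f i).1, false)) n)
        (bC (Function.update f i ((f i).1, false)) n)
        (cC (Function.update f i ((f i).1, false)) n)) :
    OV (lsPos f n) (i + 1, i + 1) = Vfun (aC f n) (bC f n) (cC f n) ∨
      (OV (lsPos f n) (i + 1, i + 1)).1 < (Vfun (aC f n) (bC f n) (cC f n)).1 := by
  have h1 : (f i).1 = true := by rw [hfi]
  have h2 : (f i).2 = true := by rw [hfi]
  rw [OV, remove_loop hi h2, hscore, caps_loop_val hi h2,
    aC_update f _ hi, bC_update f _ hi, cC_update f _ hi,
    aC_erase f hi, bC_erase f hi, cC_erase f hi, h1, hfi]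
  norm_num
  simpa using L3 (((range n).erase i).filter fun j => f j = (true, true)).card
    (((range n).erase i).filter fun j => f j = (true, false)).card
    (((range n).erase i).filter fun j => f j = (false, true)).card

/-- Removing the loop of a full vertex when there are no other kinds of vertices. -/
lemma loop_val_TT_eq (hi : i < n) (hfi : f i = (true, true))
    (hscore : (lsPos (Function.update f i ((f i).1, false)) n).score =
      Vfun (aC (Function.update f i ((f i).1, false)) n)
        (bC (Function.update f i ((f i).1, false)) n)
        (cC (Function.update f i ((f i).1, false)) n))
    (ha : 2 ≤ aC f n) (hb : bC f n = 0) (hc : cC f n = 0) :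
    OV (lsPos f n) (i + 1, i + 1) = Vfun (aC f n) (bC f n) (cC f n) := by
  have h1 : (f i).1 = true := by rw [hfi]
  have h2 : (f i).2 = true := by rw [hfi]
  have hA : 1 ≤ (((range n).erase i).filter fun j => f j = (true, true)).card := by
    have h := aC_erase f hi; rw [hfi] at h; simp at h; omega
  have hB : (((range n).erase i).filter fun j => f j = (true, false)).card = 0 := by
    have h := bC_erase f hi; rw [hfi] at h; simp at h; omega
  have hC : (((range n).erase i).filter fun j => f j = (false, true)).card = 0 := by
    have h := cC_erase f hi; rw [hfi] at h; simp at h; omega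
  rw [OV, remove_loop hi h2, hscore, caps_loop_val hi h2,
    aC_update f _ hi, bC_update f _ hi, cC_update f _ hi,
    aC_erase f hi, bC_erase f hi, cC_erase f hi, h1, hfi, hB, hC]
  norm_num
  simpa using L3eq (((range n).erase i).filter fun j => f j = (true, true)).card hA

end MoveValues

/-! #### The zero-edge case -/

lemma score_zero_case (f : ℕ → Bool × Bool) (n : ℕ) (h0 : edgesM f n = 0) :
    (lsPos f n).score = Vfun (aC f n) (bC f n) (cC f n) := by
  have hc := card_edges_eq f n
  rw [h0] at hc
  simp only [Multiset.card_zero] at hc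
  have ha : aC f n = 0 := by omega
  have hb : bC f n = 0 := by omega
  have hcc : cC f n = 0 := by omega
  have h0' : (lsPos f n).edges = 0 := h0
  rw [SCPos.score, dif_pos h0', ha, hb, hcc, Vfun_zero]

/-! #### The master lemma -/

lemma master (N : ℕ) : ∀ (f : ℕ → Bool × Bool) (n : ℕ), Multiset.card (edgesM f n) ≤ N →
    (lsPos f n).score = Vfun (aC f n) (bC f n) (cC f n) := by
  induction N with
  | zero =>
    intro f n hcard
    exact score_zero_case f n (Multiset.card_eq_zero.mp (Nat.le_zero.mp hcard))
  | succ N IH =>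
    intro f n hcard
    by_cases h0 : edgesM f n = 0
    · exact score_zero_case f n h0
    have h0' : ¬(lsPos f n).edges = 0 := h0
    have hcpos : 0 < Multiset.card (edgesM f n) := Multiset.card_pos.mpr h0
    have hbound : ∀ (e : ℕ × ℕ), e ∈ edgesM f n → ∀ g : ℕ → Bool × Bool,
        (edgesM f n).erase e = edgesM g n → Multiset.card (edgesM g n) ≤ N := by
      intro e he g hg
      rw [← hg, Multiset.card_erase_of_mem he, Nat.pred_eq_sub_one]
      omega
    rw [SCPos.score, dif_neg h0']
    apply foldl_pick
    · -- every option is the claimed value or strictly worse for the mover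
      intro o ho
      obtain ⟨⟨e, he⟩, -, rfl⟩ := List.mem_map.mp ho
      have hmem : e ∈ edgesM f n := Multiset.mem_toList.mp he
      obtain ⟨i, hi, hcase⟩ := (mem_edgesM f n e).mp hmem
      rcases hcase with ⟨h1e, rfl⟩ | ⟨h2e, rfl⟩
      · -- spoke removal
        have hscore := IH (Function.update f i (false, (f i).2)) n
          (hbound _ hmem _ (erase_spoke f hi h1e))
        show OV (lsPos f n) (0, i + 1) = _ ∨ (OV (lsPos f n) (0, i + 1)).1 < _
        rcases h2 : (f i).2
        · have hfi : f i = (true, false) := by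
            rw [show f i = ((f i).1, (f i).2) from rfl, h1e, h2]
          exact Or.inl (spoke_val_TF hi hfi hscore)
        · have hfi : f i = (true, true) := by
            rw [show f i = ((f i).1, (f i).2) from rfl, h1e, h2]
          exact spoke_val_TT hi hfi hscore
      · -- loop removal
        have hscore := IH (Function.update f i ((f i).1, false)) n
          (hbound _ hmem _ (erase_loop f hi h2e))
        show OV (lsPos f n) (i + 1, i + 1) = _ ∨ (OV (lsPos f n) (i + 1, i + 1)).1 < _
        rcases h1 : (f i).1
        · have hfi : f i = (false, true) := by
            rw [show f i = ((f i).1, (f i).2) from rfl, h1, h2e]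
          exact Or.inl (loop_val_FT hi hfi hscore)
        · have hfi : f i = (true, true) := by
            rw [show f i = ((f i).1, (f i).2) from rfl, h1, h2e]
          exact loop_val_TT hi hfi hscore
    · exact Or.inr (Or.inr rfl)
    · -- the claimed value is attained
      left
      have htot := card_edges_eq f n
      by_cases hc : 0 < cC f n
      · -- take a lone loop
        obtain ⟨i, hmemf⟩ := Finset.card_pos.mp hc
        have hi : i < n := mem_range.mp (Finset.mem_of_mem_filter i hmemf)
        have hfi : f i = (false, true) := (Finset.mem_filter.mp hmemf).2
        have hmem : (i + 1, i + 1) ∈ edgesM f n :=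
          (mem_edgesM f n _).mpr ⟨i, hi, Or.inr ⟨by rw [hfi], rfl⟩⟩
        refine List.mem_map.mpr ⟨⟨(i + 1, i + 1), Multiset.mem_toList.mpr hmem⟩,
          List.mem_attach _ _, ?_⟩
        have hscore := IH (Function.update f i ((f i).1, false)) n
          (hbound _ hmem _ (erase_loop f hi (by rw [hfi])))
        exact loop_val_FT hi hfi hscore
      by_cases hb : 0 < bC f n
      · -- take the spoke of a spoke-only vertex
        obtain ⟨i, hmemf⟩ := Finset.card_pos.mp hb
        have hi : i < n := mem_range.mp (Finset.mem_of_mem_filter i hmemf)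
        have hfi : f i = (true, false) := (Finset.mem_filter.mp hmemf).2
        have hmem : (0, i + 1) ∈ edgesM f n :=
          (mem_edgesM f n _).mpr ⟨i, hi, Or.inl ⟨by rw [hfi], rfl⟩⟩
        refine List.mem_map.mpr ⟨⟨(0, i + 1), Multiset.mem_toList.mpr hmem⟩,
          List.mem_attach _ _, ?_⟩
        have hscore := IH (Function.update f i (false, (f i).2)) n
          (hbound _ hmem _ (erase_spoke f hi (by rw [hfi])))
        exact spoke_val_TF hi hfi hscore
      -- only full vertices remain
      have ha : 0 < aC f n := by omega
      obtain ⟨i, hmemf⟩ := Finset.card_pos.mp ha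
      have hi : i < n := mem_range.mp (Finset.mem_of_mem_filter i hmemf)
      have hfi : f i = (true, true) := (Finset.mem_filter.mp hmemf).2
      by_cases ha1 : aC f n = 1
      · -- take the unique spoke
        have hmem : (0, i + 1) ∈ edgesM f n :=
          (mem_edgesM f n _).mpr ⟨i, hi, Or.inl ⟨by rw [hfi], rfl⟩⟩
        refine List.mem_map.mpr ⟨⟨(0, i + 1), Multiset.mem_toList.mpr hmem⟩,
          List.mem_attach _ _, ?_⟩
        have hscore := IH (Function.update f i (false, (f i).2)) n
          (hbound _ hmem _ (erase_spoke f hi (by rw [hfi])))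
        exact spoke_val_TT_eq hi hfi hscore ha1 (by omega)
      · -- take a loop of a full vertex
        have hmem : (i + 1, i + 1) ∈ edgesM f n :=
          (mem_edgesM f n _).mpr ⟨i, hi, Or.inr ⟨by rw [hfi], rfl⟩⟩
        refine List.mem_map.mpr ⟨⟨(i + 1, i + 1), Multiset.mem_toList.mpr hmem⟩,
          List.mem_attach _ _, ?_⟩
        have hscore := IH (Function.update f i ((f i).1, false)) n
          (hbound _ hmem _ (erase_loop f hi (by rw [hfi])))
        exact loop_val_TT_eq hi hfi hscore (by omega) (by omega) (by omega)

/-! #### Identification of `loopyStarPos` -/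

lemma loopy_eq (n : ℕ) : loopyStarPos n = lsPos (fun _ => (true, true)) n := by
  unfold loopyStarPos lsPos
  congr 1
  induction n with
  | zero => simp [edgesM]
  | succ n ih =>
    rw [edgesM, Finset.sum_range_succ, ← edgesM, ← ih, List.range_succ]
    simp only [List.flatMap_append, List.flatMap_cons, List.flatMap_nil, List.append_nil]
    rw [← Multiset.coe_add]
    congr 1

lemma aC_const (n : ℕ) : aC (fun _ => (true, true)) n = n := by simp [aC]
lemma bC_const (n : ℕ) : bC (fun _ => (true, true)) n = 0 := by simp [bC]
lemma cC_const (n : ℕ) : cC (fun _ => (true, true)) n = 0 := by simp [cC]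

end SCAux

/-- The optimal score on the loopy star `L_n` is `((n+3)/2, (n-1)/2)` for odd `n`
and `((n-2)/2, (n+4)/2)` for even `n`. -/
theorem stmt11 (n : ℕ) (hn : 1 ≤ n) :
    (loopyStarPos n).score =
      if Odd n then ((n + 3) / 2, (n - 1) / 2) else ((n - 2) / 2, (n + 4) / 2) := by
  rw [SCAux.loopy_eq, SCAux.master (Multiset.card (SCAux.edgesM (fun _ => (true, true)) n))
    (fun _ => (true, true)) n le_rfl, SCAux.aC_const, SCAux.bC_const, SCAux.cC_const]
  by_cases ho : Odd n
  · rw [if_pos ho]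
    have h1 : n % 2 = 1 := Nat.odd_iff.mp ho
    simp only [SCAux.Vfun]
    rw [if_neg (by omega), if_pos h1]
    simp
  · rw [if_neg ho]
    have h1 : n % 2 = 0 := Nat.even_iff.mp (Nat.not_odd_iff_even.mp ho)
    simp only [SCAux.Vfun]
    rw [if_neg (by omega), if_neg (by omega)]
    simp
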